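/- Let A be an extended hga, X a simplicial set with A = C^*(X), and 𝔨 = 𝔨_X the ideal defined above (containing odd-degree elements, coboundaries, E_k-values for k ≥ 1, and F_{kl}-values for (k,l) ≠ (1,1)). Then modulo 𝔨 the ∪₂-product is both a left and a right derivation: α ∪₂ (βγ) ≡ (α ∪₂ β)γ + (−1)^{|α||β|} β(α ∪₂ γ) (mod 𝔨) and (αβ) ∪₂ γ ≡ (−1)^{|β||γ|}(α ∪₂ γ)β + α(β ∪₂ γ) (mod 𝔨); moreover α ∪₂ [β,γ] ≡ [α,β] ∪₂ γ ≡ 0 (mod 𝔨). -/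
import Mathlib


/-!
STATEMENT 17: Let `A` be an extended hga (abstracting `C^*(X)` with its natural
extended hga structure) and `𝔨` the ideal defined from odd-degree elements,
coboundaries, `E_k`-values (`k ≥ 1`), `F_{kl}`-values with `(k,l) ≠ (1,1)`, and the
`∪₂`-generators.  Then modulo `𝔨` the `∪₂`-product is both a left and a right
derivation:
`α ∪₂ (βγ) ≡ (α ∪₂ β)γ + (-1)^{|α||β|} β(α ∪₂ γ)` and
`(αβ) ∪₂ γ ≡ (-1)^{|β||γ|}(α ∪₂ γ)β + α(β ∪₂ γ)` (mod `𝔨`); moreover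
`α ∪₂ [β,γ] ≡ [α,β] ∪₂ γ ≡ 0 (mod 𝔨)`.


-/

noncomputable section

/-- The sign `(-1)^p` for `p : ℤ`, as an element of `k`. -/
def sgn (k : Type) [CommRing k] (p : ℤ) : k := if Even p then 1 else -1

/-- An augmented graded dga: a `k`-algebra with a homogeneity predicate `hom a p`
("`a` is homogeneous of degree `p`"), a square-zero differential of degree `+1`
satisfying the graded Leibniz rule, and an augmentation. -/
structure GradedDGA (k A : Type) [CommRing k] [Ring A] [Algebra k A] where
  d : A →ₗ[k] A
  ε : A →ₗ[k] k
  hom : A → ℤ → Prop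
  hom_zero : ∀ p, hom 0 p
  hom_one : hom 1 0
  hom_add : ∀ {a b p}, hom a p → hom b p → hom (a + b) p
  hom_smul : ∀ (c : k) {a p}, hom a p → hom (c • a) p
  hom_mul : ∀ {a b p q}, hom a p → hom b q → hom (a * b) (p + q)
  hom_d : ∀ {a p}, hom a p → hom (d a) (p + 1)
  d_sq : ∀ a, d (d a) = 0
  leibniz : ∀ {a : A} (b : A) {p}, hom a p →
      d (a * b) = d a * b + sgn k p • (a * d b)
  ε_one : ε 1 = 1
  ε_mul : ∀ a b, ε (a * b) = ε a * ε b
  ε_d : ∀ a, ε (d a) = 0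

namespace GradedDGA

variable {k A : Type} [CommRing k] [Ring A] [Algebra k A]

/-- Replace the `j`-th entry of `l` by its differential. -/
def dAt (S : GradedDGA k A) (l : List A) (j : ℕ) : List A :=
  l.take j ++ S.d (l.getD j 0) :: l.drop (j + 1)

/-- Multiply the entries of `l` at positions `m-1` and `m`. -/
def mulAt (l : List A) (m : ℕ) : List A :=
  l.take (m - 1) ++ (l.getD (m - 1) 0 * l.getD m 0) :: l.drop (m + 1)

end GradedDGA

/-- A homotopy Gerstenhaber algebra: an augmented graded dga with brace operations
`E_k(a; b₁, …, b_k)`, encoded as `E a [b₁, …, b_k]` (so `E₀ = 1_A`), which are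
multilinear, vanish when an argument is the unit, take values in the augmentation
ideal, and satisfy the hga differential and product formulas with explicit
Koszul signs. -/
structure HGAlg (k A : Type) [CommRing k] [Ring A] [Algebra k A]
    extends GradedDGA k A where
  E : A → List A → A
  E_nil : ∀ a, E a [] = a
  E_one_left : ∀ l, l ≠ [] → E 1 l = 0
  E_one_arg : ∀ a l₁ l₂, E a (l₁ ++ (1 : A) :: l₂) = 0
  E_aug : ∀ a l, l ≠ [] → ε (E a l) = 0
  E_add_left : ∀ a b l, E (a + b) l = E a l + E b l
  E_smul_left : ∀ (c : k) a l, E (c • a) l = c • E a l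
  E_add_arg : ∀ a l₁ l₂ x y,
      E a (l₁ ++ (x + y) :: l₂) = E a (l₁ ++ x :: l₂) + E a (l₁ ++ y :: l₂)
  E_smul_arg : ∀ (c : k) a l₁ l₂ x,
      E a (l₁ ++ (c • x) :: l₂) = c • E a (l₁ ++ x :: l₂)
  E_hom : ∀ (a : A) (p : ℤ) (l : List A) (q : List ℤ), l.length = q.length →
      hom a p → (∀ i < l.length, hom (l.getD i 0) (q.getD i 0)) →
      hom (E a l) (p + q.sum - l.length)
  /-- The differential formula
  `d(E_k)(a; b₁,…,b_k) = ±b₁ E_{k-1}(a; b₂,…) + Σ ± E_{k-1}(a; …, b_m b_{m+1}, …)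
  + ± E_{k-1}(a; b₁,…,b_{k-1}) b_k`, with Koszul signs made explicit. -/
  E_d : ∀ (a : A) (p : ℤ) (l : List A) (q : List ℤ), l ≠ [] →
      l.length = q.length → hom a p →
      (∀ i < l.length, hom (l.getD i 0) (q.getD i 0)) →
      d (E a l) - sgn k (l.length : ℤ) • E (d a) l
        - sgn k (l.length : ℤ) •
            ∑ j ∈ Finset.range l.length,
              sgn k (p + (q.take j).sum) • E a (toGradedDGA.dAt l j)
      = sgn k ((q.getD 0 0) * (p + (l.length : ℤ) - 1)) • (l.getD 0 0 * E a l.tail)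
        + (∑ m ∈ Finset.Ioo 0 l.length, sgn k (m : ℤ) • E a (GradedDGA.mulAt l m))
        + sgn k (l.length : ℤ) •
            (E a (l.take (l.length - 1)) * l.getD (l.length - 1) 0)
  /-- The product formula
  `E_k(a₁ a₂; b₁,…,b_k) = Σ_{k₁+k₂=k} ± E_{k₁}(a₁; b₁,…,b_{k₁}) E_{k₂}(a₂; b_{k₁+1},…)`,
  with Koszul signs made explicit. -/
  E_mul : ∀ (a₁ a₂ : A) (p₁ p₂ : ℤ) (l : List A) (q : List ℤ),
      l.length = q.length → hom a₁ p₁ → hom a₂ p₂ →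
      (∀ i < l.length, hom (l.getD i 0) (q.getD i 0)) →
      E (a₁ * a₂) l = ∑ m ∈ Finset.range (l.length + 1),
        sgn k (((l.length : ℤ) - m) * (p₁ + (q.take m).sum) + p₂ * (q.take m).sum) •
          (E a₁ (l.take m) * E a₂ (l.drop m))

namespace HGAlg

variable {k A : Type} [CommRing k] [Ring A] [Algebra k A]

/-- The cup-one product `a ∪₁ b = -E₁(a; b)`. -/
def cupOne (S : HGAlg k A) (a b : A) : A := - S.E a [b]

end HGAlg

/-- An extended homotopy Gerstenhaber algebra: an hga with additional operations
`F_{kl}(a₁,…,a_k; b₁,…,b_l)` of degree `-(k+l)`, encoded as `F l₁ l₂`. -/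
structure ExtHGAlg (k A : Type) [CommRing k] [Ring A] [Algebra k A]
    extends HGAlg k A where
  F : List A → List A → A
  F_nil_left : ∀ l, F [] l = 0
  F_nil_right : ∀ l, F l [] = 0
  F_one_left : ∀ l₁ l₂ l, F (l₁ ++ (1 : A) :: l₂) l = 0
  F_one_right : ∀ l l₁ l₂, F l (l₁ ++ (1 : A) :: l₂) = 0
  F_aug : ∀ l₁ l₂, l₁ ≠ [] → l₂ ≠ [] → ε (F l₁ l₂) = 0
  F_add_left : ∀ l₁ l₂ x y l,
      F (l₁ ++ (x + y) :: l₂) l = F (l₁ ++ x :: l₂) l + F (l₁ ++ y :: l₂) l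
  F_smul_left : ∀ (c : k) l₁ l₂ x l,
      F (l₁ ++ (c • x) :: l₂) l = c • F (l₁ ++ x :: l₂) l
  F_add_right : ∀ l l₁ l₂ x y,
      F l (l₁ ++ (x + y) :: l₂) = F l (l₁ ++ x :: l₂) + F l (l₁ ++ y :: l₂)
  F_smul_right : ∀ (c : k) l l₁ l₂ x,
      F l (l₁ ++ (c • x) :: l₂) = c • F l (l₁ ++ x :: l₂)
  F_hom : ∀ (l₁ l₂ : List A) (p₁ p₂ : List ℤ),
      l₁.length = p₁.length → l₂.length = p₂.length →
      (∀ i < l₁.length, hom (l₁.getD i 0) (p₁.getD i 0)) →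
      (∀ i < l₂.length, hom (l₂.getD i 0) (p₂.getD i 0)) →
      hom (F l₁ l₂) (p₁.sum + p₂.sum - l₁.length - l₂.length)
  /-- The `(1,1)`-case of the differential formula for the `F`-operations:
  `d(F₁₁)(a;b) = E₁(a;b) + (-1)^{|a||b|} E₁(b;a)`. -/
  F_d11 : ∀ (a b : A) (p q : ℤ), hom a p → hom b q →
      d (F [a] [b]) - F [d a] [b] - sgn k p • F [a] [d b]
        = E a [b] + sgn k (p * q) • E b [a]
  /-- The `(1,2)`-case of the differential formula for the `F`-operations. -/
  F_d12 : ∀ (a b c : A) (p q r : ℤ), hom a p → hom b q → hom c r →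
      d (F [a] [b, c]) + F [d a] [b, c] + sgn k p • F [a] [d b, c]
          + sgn k (p + q) • F [a] [b, d c]
        = E a [b, c] - sgn k (p * q) • (b * F [a] [c]) + F [a] [b * c]
          - F [a] [b] * c
  /-- The `(2,1)`-case of the differential formula for the `F`-operations. -/
  F_d21 : ∀ (a b c : A) (p q r : ℤ), hom a p → hom b q → hom c r →
      d (F [a, b] [c]) + F [d a, b] [c] + sgn k p • F [a, d b] [c]
          + sgn k (p + q) • F [a, b] [d c]
        = a * F [b] [c] - F [a * b] [c] + sgn k (q * r) • (F [a] [c] * b)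
          - sgn k (r * (p + q)) • E c [a, b]

namespace ExtHGAlg

variable {k A : Type} [CommRing k] [Ring A] [Algebra k A]

/-- The cup-two product `a ∪₂ b = -F₁₁(a; b)`. -/
def cupTwo (S : ExtHGAlg k A) (a b : A) : A := - S.F [a] [b]

end ExtHGAlg

/-- The iterated `∪₁`-product `U_k(b₀,…,b_k)`, with `U₀(b₀) = b₀` and
`U_k(b₀,…,b_k) = -U_{k-1}(b₀,…,b_{k-1}) ∪₁ b_k`. -/
def iterCupOne {k A : Type} [CommRing k] [Ring A] [Algebra k A]
    (S : HGAlg k A) : List A → A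
  | [] => 0
  | b :: rest => rest.foldl (fun acc x => - S.cupOne acc x) b

/-- The generators of the ideal `𝔨`: odd-degree elements, coboundaries, `E_k`-values
(`k ≥ 1`), `F_{kl}`-values with `(k,l) ≠ (1,1)`, elements `a ∪₂ E_k(b;c₁,…,c_k)` with
`k ≥ 2`, and elements `a ∪₂ U_k(b₀,…,b_k)` with `a` and the `b_i` cocycles. -/
def kgen {k A : Type} [CommRing k] [Ring A] [Algebra k A] (S : ExtHGAlg k A) : Set A :=
  {x | ∃ p, Odd p ∧ S.hom x p} ∪
  {x | ∃ y, x = S.d y} ∪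
  {x | ∃ a l, l ≠ [] ∧ x = S.E a l} ∪
  {x | ∃ l₁ l₂, l₁ ≠ [] ∧ l₂ ≠ [] ∧ ¬(l₁.length = 1 ∧ l₂.length = 1) ∧
    x = S.F l₁ l₂} ∪
  {x | ∃ a b l, 2 ≤ l.length ∧ x = S.cupTwo a (S.E b l)} ∪
  {x | ∃ (a : A) (l : List A), l ≠ [] ∧ S.d a = 0 ∧ (∀ y ∈ l, S.d y = 0) ∧
    x = S.cupTwo a (iterCupOne S.toHGAlg l)}

/-- The two-sided ideal `𝔨` generated by `kgen`, realized as the `k`-span of all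
products `a · g · b` with `g` a generator. -/
def kIdeal {k A : Type} [CommRing k] [Ring A] [Algebra k A] (S : ExtHGAlg k A) :
    Submodule k A :=
  Submodule.span k {x | ∃ (a b : A) (g : A), g ∈ kgen S ∧ x = a * g * b}


section Helpers

lemma sgn_add (k : Type) [CommRing k] (m n : ℤ) :
    sgn k (m + n) = sgn k m * sgn k n := by
  by_cases hm : Even m <;> by_cases hn : Even n <;>
    simp [sgn, Int.even_add, hm, hn]

lemma sgn_even (k : Type) [CommRing k] {n : ℤ} (h : Even n) : sgn k n = 1 :=
  if_pos h

lemma sgn_one (k : Type) [CommRing k] : sgn k 1 = -1 := by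
  simp [sgn, Int.even_iff]

variable {k A : Type} [CommRing k] [Ring A] [Algebra k A] (S : ExtHGAlg k A)

lemma mem_kIdeal_of_gen {g : A} (h : g ∈ kgen S) : g ∈ kIdeal S := by
  apply Submodule.subset_span
  exact ⟨1, 1, g, h, by rw [one_mul, mul_one]⟩

lemma d_mem_kIdeal (y : A) : S.d y ∈ kIdeal S :=
  mem_kIdeal_of_gen S (Or.inl (Or.inl (Or.inl (Or.inl (Or.inr ⟨y, rfl⟩)))))

lemma E_mem_kIdeal (a : A) (l : List A) (h : l ≠ []) : S.E a l ∈ kIdeal S :=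
  mem_kIdeal_of_gen S (Or.inl (Or.inl (Or.inl (Or.inr ⟨a, l, h, rfl⟩))))

lemma F12_mem_kIdeal (a b c : A) : S.F [a] [b, c] ∈ kIdeal S :=
  mem_kIdeal_of_gen S (Or.inl (Or.inl (Or.inr
    ⟨[a], [b, c], by simp, by simp, by simp, rfl⟩)))

lemma F21_mem_kIdeal (a b c : A) : S.F [a, b] [c] ∈ kIdeal S :=
  mem_kIdeal_of_gen S (Or.inl (Or.inl (Or.inr
    ⟨[a, b], [c], by simp, by simp, by simp, rfl⟩)))

/-- Graded commutators lie in `𝔨`. -/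
lemma comm_mem_kIdeal (x y : A) (px py : ℤ) (hx : S.hom x px) (hy : S.hom y py) :
    x * y - sgn k (px * py) • (y * x) ∈ kIdeal S := by
  have hE := S.E_d x px [y] [py] (by simp) (by simp) hx
    (by intro i hi; simp at hi; subst hi; simpa)
  simp [GradedDGA.dAt, Finset.sum_range_succ, sgn_one, S.E_nil,
    (by decide : Finset.Ioo 0 1 = (∅ : Finset ℕ))] at hE
  rw [show px * py = py * px from mul_comm _ _]
  have h2 : x * y - sgn k (py * px) • (y * x)
      = -(S.d (S.E x [y])) - S.E (S.d x) [y] - sgn k px • S.E x [S.d y] := by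
    linear_combination (norm := module) hE
  rw [h2]
  exact sub_mem (sub_mem (neg_mem (d_mem_kIdeal S _)) (E_mem_kIdeal S _ _ (by simp)))
    (Submodule.smul_mem _ _ (E_mem_kIdeal S _ _ (by simp)))


lemma leftDeriv_mem (a b c : A) (p q r : ℤ)
    (ha : S.hom a p) (hb : S.hom b q) (hc : S.hom c r) :
    S.cupTwo a (b * c)
      - (S.cupTwo a b * c + sgn k (p * q) • (b * S.cupTwo a c)) ∈ kIdeal S := by
  have hF := S.F_d12 a b c p q r ha hb hc
  have h2 : S.cupTwo a (b * c)
        - (S.cupTwo a b * c + sgn k (p * q) • (b * S.cupTwo a c))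
      = S.E a [b, c] - (S.d (S.F [a] [b, c]) + S.F [S.d a] [b, c]
          + sgn k p • S.F [a] [S.d b, c] + sgn k (p + q) • S.F [a] [b, S.d c]) := by
    simp only [ExtHGAlg.cupTwo, neg_mul, mul_neg]
    linear_combination (norm := module) hF
  rw [h2]
  exact sub_mem (E_mem_kIdeal S _ _ (by simp))
    (add_mem (add_mem (add_mem (d_mem_kIdeal S _) (F12_mem_kIdeal S _ _ _))
      (Submodule.smul_mem _ _ (F12_mem_kIdeal S _ _ _)))
      (Submodule.smul_mem _ _ (F12_mem_kIdeal S _ _ _)))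

lemma rightDeriv_mem (a b c : A) (p q r : ℤ)
    (ha : S.hom a p) (hb : S.hom b q) (hc : S.hom c r) :
    S.cupTwo (a * b) c
      - (sgn k (q * r) • (S.cupTwo a c * b) + a * S.cupTwo b c) ∈ kIdeal S := by
  have hF := S.F_d21 a b c p q r ha hb hc
  have h2 : S.cupTwo (a * b) c
        - (sgn k (q * r) • (S.cupTwo a c * b) + a * S.cupTwo b c)
      = (S.d (S.F [a, b] [c]) + S.F [S.d a, b] [c]
          + sgn k p • S.F [a, S.d b] [c] + sgn k (p + q) • S.F [a, b] [S.d c])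
        + sgn k (r * (p + q)) • S.E c [a, b] := by
    simp only [ExtHGAlg.cupTwo, neg_mul, mul_neg]
    linear_combination (norm := module) -hF
  rw [h2]
  exact add_mem
    (add_mem (add_mem (add_mem (d_mem_kIdeal S _) (F21_mem_kIdeal S _ _ _))
      (Submodule.smul_mem _ _ (F21_mem_kIdeal S _ _ _)))
      (Submodule.smul_mem _ _ (F21_mem_kIdeal S _ _ _)))
    (Submodule.smul_mem _ _ (E_mem_kIdeal S _ _ (by simp)))


lemma sgn_cases (k : Type) [CommRing k] (n : ℤ) : sgn k n = 1 ∨ sgn k n = -1 := by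
  unfold sgn; split <;> simp

lemma cupTwo_hom (x y : A) (px py : ℤ) (hx : S.hom x px) (hy : S.hom y py) :
    S.hom (S.cupTwo x y) (px + py - 2) := by
  have h := S.F_hom [x] [y] [px] [py] rfl rfl
    (by intro i hi; simp at hi; subst hi; simpa)
    (by intro i hi; simp at hi; subst hi; simpa)
  simp only [List.sum_cons, List.sum_nil, add_zero, List.length_cons,
    List.length_nil, Nat.cast_one, Nat.cast_zero, zero_add, Nat.cast_ofNat] at h
  have h2 : px + py - 2 = px + py - 1 - 1 := by ring
  rw [h2, ExtHGAlg.cupTwo, ← neg_one_smul k]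
  exact S.hom_smul _ h

lemma cupTwo_sub_smul_right (x u v : A) (e : k) :
    S.cupTwo x (u - e • v) = S.cupTwo x u - e • S.cupTwo x v := by
  have h1 := S.F_add_right [x] [] [] u ((-e) • v)
  have h2 := S.F_smul_right (-e) [x] [] [] v
  simp only [List.nil_append] at h1 h2
  rw [ExtHGAlg.cupTwo, ExtHGAlg.cupTwo, ExtHGAlg.cupTwo, sub_eq_add_neg,
    ← neg_smul, h1, h2]
  module

lemma cupTwo_sub_smul_left (x u v : A) (e : k) :
    S.cupTwo (u - e • v) x = S.cupTwo u x - e • S.cupTwo v x := by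
  have h1 := S.F_add_left [] [] u ((-e) • v) [x]
  have h2 := S.F_smul_left (-e) [] [] v [x]
  simp only [List.nil_append] at h1 h2
  rw [ExtHGAlg.cupTwo, ExtHGAlg.cupTwo, ExtHGAlg.cupTwo, sub_eq_add_neg,
    ← neg_smul, h1, h2]
  module

end Helpers

/-- Modulo `𝔨`, the `∪₂`-product is a left and a right derivation,
and `∪₂`-products with a graded commutator in either slot vanish. -/
theorem cupTwo_derivation_mod_kIdeal
    {k A : Type} [CommRing k] [Ring A] [Algebra k A] (S : ExtHGAlg k A)
    (a b c : A) (p q r : ℤ) (ha : S.hom a p) (hb : S.hom b q) (hc : S.hom c r) :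
    -- `∪₂` is a left derivation modulo `𝔨`
    (S.cupTwo a (b * c)
      - (S.cupTwo a b * c + sgn k (p * q) • (b * S.cupTwo a c)) ∈ kIdeal S) ∧
    -- `∪₂` is a right derivation modulo `𝔨`
    (S.cupTwo (a * b) c
      - (sgn k (q * r) • (S.cupTwo a c * b) + a * S.cupTwo b c) ∈ kIdeal S) ∧
    -- `α ∪₂ [β,γ] ≡ 0 (mod 𝔨)`
    (S.cupTwo a (b * c - sgn k (q * r) • (c * b)) ∈ kIdeal S) ∧
    -- `[α,β] ∪₂ γ ≡ 0 (mod 𝔨)`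
    (S.cupTwo (a * b - sgn k (p * q) • (b * a)) c ∈ kIdeal S) := by
  refine ⟨leftDeriv_mem S a b c p q r ha hb hc,
          rightDeriv_mem S a b c p q r ha hb hc, ?_, ?_⟩
  · -- `α ∪₂ [β,γ] ≡ 0`
    have lin := cupTwo_sub_smul_right S a (b * c) (c * b) (sgn k (q * r))
    have D1 := leftDeriv_mem S a b c p q r ha hb hc
    have D2 := leftDeriv_mem S a c b p r q ha hc hb
    have hab := cupTwo_hom S a b p q ha hb
    have hac := cupTwo_hom S a c p r ha hc
    have C1 := comm_mem_kIdeal S (S.cupTwo a b) c (p + q - 2) r hab hc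
    have C2 := comm_mem_kIdeal S b (S.cupTwo a c) q (p + r - 2) hb hac
    have e1 : sgn k ((p + q - 2) * r) = sgn k (p * r) * sgn k (q * r) := by
      rw [show (p + q - 2) * r = p * r + (q * r + -2 * r) by ring, sgn_add,
        sgn_add, sgn_even k (n := -2 * r) ⟨-r, by ring⟩, mul_one]
    have e2 : sgn k (q * (p + r - 2)) = sgn k (p * q) * sgn k (q * r) := by
      rw [show q * (p + r - 2) = p * q + (q * r + -2 * q) by ring, sgn_add,
        sgn_add, sgn_even k (n := -2 * q) ⟨-q, by ring⟩, mul_one]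
    rw [e1] at C1
    rw [e2] at C2
    have M := add_mem (sub_mem D1 (Submodule.smul_mem _ (sgn k (q * r)) D2))
      (add_mem C1 (Submodule.smul_mem _ (sgn k (p * q)) C2))
    have key : S.cupTwo a (b * c - sgn k (q * r) • (c * b))
        = (S.cupTwo a (b * c)
            - (S.cupTwo a b * c + sgn k (p * q) • (b * S.cupTwo a c))
          - sgn k (q * r) • (S.cupTwo a (c * b)
            - (S.cupTwo a c * b + sgn k (p * r) • (c * S.cupTwo a b))))
          + ((S.cupTwo a b * c
              - (sgn k (p * r) * sgn k (q * r)) • (c * S.cupTwo a b))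
            + sgn k (p * q) • (b * S.cupTwo a c
              - (sgn k (p * q) * sgn k (q * r)) • (S.cupTwo a c * b))) := by
      rw [lin]
      rcases sgn_cases k (p * q) with h1 | h1 <;>
        rcases sgn_cases k (q * r) with h2 | h2 <;>
          rcases sgn_cases k (p * r) with h3 | h3 <;>
            rw [h1, h2, h3] <;> module
    rw [key]; exact M
  · -- `[α,β] ∪₂ γ ≡ 0`
    have lin := cupTwo_sub_smul_left S c (a * b) (b * a) (sgn k (p * q))
    have D1 := rightDeriv_mem S a b c p q r ha hb hc
    have D2 := rightDeriv_mem S b a c q p r hb ha hc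
    have hac := cupTwo_hom S a c p r ha hc
    have hbc := cupTwo_hom S b c q r hb hc
    have C3 := comm_mem_kIdeal S (S.cupTwo a c) b (p + r - 2) q hac hb
    have C4 := comm_mem_kIdeal S a (S.cupTwo b c) p (q + r - 2) ha hbc
    have e3 : sgn k ((p + r - 2) * q) = sgn k (p * q) * sgn k (q * r) := by
      rw [show (p + r - 2) * q = p * q + (q * r + -2 * q) by ring, sgn_add,
        sgn_add, sgn_even k (n := -2 * q) ⟨-q, by ring⟩, mul_one]
    have e4 : sgn k (p * (q + r - 2)) = sgn k (p * q) * sgn k (p * r) := by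
      rw [show p * (q + r - 2) = p * q + (p * r + -2 * p) by ring, sgn_add,
        sgn_add, sgn_even k (n := -2 * p) ⟨-p, by ring⟩, mul_one]
    rw [e3] at C3
    rw [e4] at C4
    have M := add_mem (sub_mem D1 (Submodule.smul_mem _ (sgn k (p * q)) D2))
      (add_mem (Submodule.smul_mem _ (sgn k (q * r)) C3) C4)
    have key : S.cupTwo (a * b - sgn k (p * q) • (b * a)) c
        = (S.cupTwo (a * b) c
            - (sgn k (q * r) • (S.cupTwo a c * b) + a * S.cupTwo b c)
          - sgn k (p * q) • (S.cupTwo (b * a) c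
            - (sgn k (p * r) • (S.cupTwo b c * a) + b * S.cupTwo a c)))
          + (sgn k (q * r) • (S.cupTwo a c * b
              - (sgn k (p * q) * sgn k (q * r)) • (b * S.cupTwo a c))
            + (a * S.cupTwo b c
              - (sgn k (p * q) * sgn k (p * r)) • (S.cupTwo b c * a))) := by
      rw [lin]
      rcases sgn_cases k (p * q) with h1 | h1 <;>
        rcases sgn_cases k (q * r) with h2 | h2 <;>
          rcases sgn_cases k (p * r) with h3 | h3 <;>
            rw [h1, h2, h3] <;> module
    rw [key]; exact M


end
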